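/- For all X ∈ ℝ^{(n−r)×r}, Y ∈ ℝ^{(m−r)×r} and H ∈ ℝ^{r×r}, one has exp(U_⊥XU⁺) · (U H Vᵀ) · (exp(V_⊥YV⁺))ᵀ = (U + U_⊥X)·H·(V + V_⊥Y)ᵀ, where exp denotes the matrix exponential. -/

import Mathlib

open Matrix

lemma aux_isUnit (k : ℕ) (A : Matrix (Fin k) (Fin k) ℝ) (h : A.rank = k) : IsUnit A := by
  rw [← Matrix.mulVec_surjective_iff_isUnit]
  have : LinearMap.range A.mulVecLin = ⊤ := by
    apply Submodule.eq_top_of_finrank_eq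
    simpa [Matrix.rank] using h
  intro y
  exact LinearMap.range_eq_top.mp this y

lemma aux_exp (k : ℕ) (a : Matrix (Fin k) (Fin k) ℝ) (h : a * a = 0) :
    NormedSpace.exp a = 1 + a := by
  rw [NormedSpace.exp_eq_tsum (𝕂 := ℝ)]
  simp only []
  rw [tsum_eq_sum (s := Finset.range 2)]
  · norm_num [Finset.sum_range_succ]
  · intro b hb
    have hb2 : 2 ≤ b := by simp at hb; omega
    obtain ⟨c, rfl⟩ := Nat.exists_eq_add_of_le hb2
    rw [pow_add, pow_two, h, Matrix.zero_mul, smul_zero]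

/-- `exp (U_⊥ X U⁺) (U H Vᵀ) (exp (V_⊥ Y V⁺))ᵀ = (U + U_⊥ X) H (V + V_⊥ Y)ᵀ`. -/
theorem stmt18 (n m r : ℕ) (hr : 0 < r) (hrn : r < n) (hrm : r < m)
    (U : Matrix (Fin n) (Fin r) ℝ) (hU : U.rank = r)
    (V : Matrix (Fin m) (Fin r) ℝ) (hV : V.rank = r)
    (Uperp : Matrix (Fin n) (Fin (n - r)) ℝ) (hUperp : Uperp.rank = n - r)
    (Vperp : Matrix (Fin m) (Fin (m - r)) ℝ) (hVperp : Vperp.rank = m - r)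
    (horthU : Uᵀ * Uperp = 0) (horthV : Vᵀ * Vperp = 0)
    (X : Matrix (Fin (n - r)) (Fin r) ℝ) (Y : Matrix (Fin (m - r)) (Fin r) ℝ)
    (H : Matrix (Fin r) (Fin r) ℝ) :
    NormedSpace.exp (Uperp * X * ((Uᵀ * U)⁻¹ * Uᵀ)) * (U * H * Vᵀ) *
        (NormedSpace.exp (Vperp * Y * ((Vᵀ * V)⁻¹ * Vᵀ)))ᵀ
      = (U + Uperp * X) * H * (V + Vperp * Y)ᵀ := by
  have hUU : IsUnit (Uᵀ * U) := aux_isUnit r _ (by rw [Matrix.rank_transpose_mul_self, hU])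
  have hVV : IsUnit (Vᵀ * V) := aux_isUnit r _ (by rw [Matrix.rank_transpose_mul_self, hV])
  have hUinv : (Uᵀ * U)⁻¹ * (Uᵀ * U) = 1 :=
    Matrix.nonsing_inv_mul _ ((Matrix.isUnit_iff_isUnit_det _).mp hUU)
  have hVinv : (Vᵀ * V)⁻¹ * (Vᵀ * V) = 1 :=
    Matrix.nonsing_inv_mul _ ((Matrix.isUnit_iff_isUnit_det _).mp hVV)
  set N := Uperp * X * ((Uᵀ * U)⁻¹ * Uᵀ) with hN
  set M := Vperp * Y * ((Vᵀ * V)⁻¹ * Vᵀ) with hM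
  have hN2 : N * N = 0 := by
    rw [hN]
    calc Uperp * X * ((Uᵀ * U)⁻¹ * Uᵀ) * (Uperp * X * ((Uᵀ * U)⁻¹ * Uᵀ))
        = Uperp * X * (Uᵀ * U)⁻¹ * (Uᵀ * Uperp) * (X * ((Uᵀ * U)⁻¹ * Uᵀ)) := by
          simp only [Matrix.mul_assoc]
      _ = 0 := by rw [horthU]; simp
  have hM2 : M * M = 0 := by
    rw [hM]
    calc Vperp * Y * ((Vᵀ * V)⁻¹ * Vᵀ) * (Vperp * Y * ((Vᵀ * V)⁻¹ * Vᵀ))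
        = Vperp * Y * (Vᵀ * V)⁻¹ * (Vᵀ * Vperp) * (Y * ((Vᵀ * V)⁻¹ * Vᵀ)) := by
          simp only [Matrix.mul_assoc]
      _ = 0 := by rw [horthV]; simp
  rw [aux_exp _ _ hN2, aux_exp _ _ hM2]
  have hNU : N * U = Uperp * X := by
    rw [hN]
    calc Uperp * X * ((Uᵀ * U)⁻¹ * Uᵀ) * U = Uperp * X * ((Uᵀ * U)⁻¹ * (Uᵀ * U)) := by
          simp only [Matrix.mul_assoc]
      _ = Uperp * X := by rw [hUinv, Matrix.mul_one]
  have hMV : M * V = Vperp * Y := by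
    rw [hM]
    calc Vperp * Y * ((Vᵀ * V)⁻¹ * Vᵀ) * V = Vperp * Y * ((Vᵀ * V)⁻¹ * (Vᵀ * V)) := by
          simp only [Matrix.mul_assoc]
      _ = Vperp * Y := by rw [hVinv, Matrix.mul_one]
  have key : (1 + N) * (U * H * Vᵀ) * (1 + M)ᵀ = ((1 + N) * U) * H * ((1 + M) * V)ᵀ := by
    rw [Matrix.transpose_mul, ← Matrix.mul_assoc]
    simp only [Matrix.mul_assoc]
  have hNU' : (1 + N) * U = U + Uperp * X := by
    rw [Matrix.add_mul, Matrix.one_mul, hNU]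
  have hMV' : (1 + M) * V = V + Vperp * Y := by
    rw [Matrix.add_mul, Matrix.one_mul, hMV]
  rw [key, hNU', hMV']
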